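/- Suppose in addition that there is a constant c > 0 with L ≤ c·n²·F(x*) (as holds when F is the multilinear extension of a submodular set function). Then the Frank–Wolfe algorithm's best iterate satisfies max_{0 ≤ j ≤ T} F(x(t_j)) ≥ (1/4 − (c/8)·n³·H_{2,T}/H_T²) F(x*), where H_T = ∑_{k=1}^T 1/k and H_{2,T} = ∑_{k=1}^T 1/k². -/

import Mathlib

/-- The harmonic number `H j = ∑_{k=1}^j 1/k` (with `H 0 = 0`). -/
noncomputable def harmonicNum (j : ℕ) : ℝ := ∑ k ∈ Finset.range j, (1 : ℝ) / (k + 1)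

/-- `H_{2,j} = ∑_{k=1}^j 1/k²`. -/
noncomputable def harmonicNum2 (j : ℕ) : ℝ := ∑ k ∈ Finset.range j, (1 : ℝ) / ((k : ℝ) + 1) ^ 2

/-- The time values `t_j = 1/(1 - ln(1 + H_j/H_T)) - 1` of the Frank–Wolfe algorithm. -/
noncomputable def fwTime (T j : ℕ) : ℝ :=
  1 / (1 - Real.log (1 + harmonicNum j / harmonicNum T)) - 1

/-- The Frank–Wolfe step ratio `e^{-1/(1+t_j) + 1/(1+t_{j+1})}`. -/
noncomputable def fwRatio (T j : ℕ) : ℝ :=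
  Real.exp (-(1 / (1 + fwTime T j)) + 1 / (1 + fwTime T (j + 1)))

/-- `√a_{t_j} = e^{t_j/(1+t_j)}`. -/
noncomputable def fwSqa (T j : ℕ) : ℝ := Real.exp (fwTime T j / (1 + fwTime T j))

/-- `F : [0,1]^n → ℝ` is DR-submodular: for all `x ≤ y` in `[0,1]^n`, coordinates `i` and
`a > 0` with `x + a·e_i, y + a·e_i ∈ [0,1]^n`, one has
`F(x + a·e_i) - F(x) ≥ F(y + a·e_i) - F(y)`. -/
def DRSubmodular {n : ℕ} (F : (Fin n → ℝ) → ℝ) : Prop :=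
  ∀ x y : Fin n → ℝ, x ∈ Set.Icc (0 : Fin n → ℝ) 1 → y ∈ Set.Icc (0 : Fin n → ℝ) 1 →
    x ≤ y → ∀ i : Fin n, ∀ a : ℝ, 0 < a →
      x + a • (Pi.single i 1 : Fin n → ℝ) ∈ Set.Icc (0 : Fin n → ℝ) 1 →
      y + a • (Pi.single i 1 : Fin n → ℝ) ∈ Set.Icc (0 : Fin n → ℝ) 1 →
      F (y + a • (Pi.single i 1 : Fin n → ℝ)) - F y ≤
        F (x + a • (Pi.single i 1 : Fin n → ℝ)) - F x

/-- The continuous linear map `y ↦ ⟨g, y⟩ = ∑ i, g i * y i` on `ℝⁿ`. -/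
noncomputable def gradCLM {n : ℕ} (g : Fin n → ℝ) : (Fin n → ℝ) →L[ℝ] ℝ :=
  ∑ i, g i • (ContinuousLinearMap.proj i : (Fin n → ℝ) →L[ℝ] ℝ)

/-- `gradF` is the gradient of `F` on the box `[0,1]^n`: at each point of the box, `F` is
differentiable within the box with derivative `y ↦ ⟨gradF z, y⟩`. -/
def HasGradientOnBox {n : ℕ} (F : (Fin n → ℝ) → ℝ) (gradF : (Fin n → ℝ) → Fin n → ℝ) : Prop :=
  ∀ z ∈ Set.Icc (0 : Fin n → ℝ) 1, HasFDerivWithinAt F (gradCLM (gradF z)) (Set.Icc 0 1) z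

lemma gradCLM_apply {n : ℕ} (g y : Fin n → ℝ) : gradCLM g y = ∑ i, g i * y i := by
  simp [gradCLM]

lemma gradCLM_single {n : ℕ} (g : Fin n → ℝ) (i : Fin n) :
    gradCLM g (Pi.single i 1) = g i := by
  rw [gradCLM_apply]
  rw [Finset.sum_eq_single i]
  · simp
  · intro b _ hb; simp [Pi.single_apply, hb]
  · simp

lemma box_apply {n : ℕ} {z : Fin n → ℝ} (hz : z ∈ Set.Icc (0:Fin n → ℝ) 1) (k : Fin n) :
    0 ≤ z k ∧ z k ≤ 1 := ⟨hz.1 k, hz.2 k⟩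

lemma mem_box_add {n : ℕ} {z : Fin n → ℝ} (hz : z ∈ Set.Icc (0:Fin n → ℝ) 1)
    {i : Fin n} {a : ℝ} (ha : 0 ≤ a) (h1 : z i + a ≤ 1) :
    z + a • (Pi.single i 1 : Fin n → ℝ) ∈ Set.Icc (0:Fin n → ℝ) 1 := by
  constructor <;> intro k <;>
    simp only [Pi.add_apply, Pi.smul_apply, Pi.single_apply, smul_eq_mul, Pi.zero_apply,
      Pi.one_apply] <;> obtain ⟨h0, h1'⟩ := box_apply hz k <;> by_cases hk : k = i
  · subst hk; simp; linarith
  · simp [hk]; linarith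
  · subst hk; simpa using h1
  · simp [hk]; linarith

lemma mem_box_sub {n : ℕ} {z : Fin n → ℝ} (hz : z ∈ Set.Icc (0:Fin n → ℝ) 1)
    {i : Fin n} {a : ℝ} (ha : 0 ≤ a) (h1 : a ≤ z i) :
    z - a • (Pi.single i 1 : Fin n → ℝ) ∈ Set.Icc (0:Fin n → ℝ) 1 := by
  constructor <;> intro k <;>
    simp only [Pi.sub_apply, Pi.smul_apply, Pi.single_apply, smul_eq_mul, Pi.zero_apply,
      Pi.one_apply] <;> obtain ⟨h0, h1'⟩ := box_apply hz k <;> by_cases hk : k = i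
  · subst hk; simp; linarith
  · simp [hk]; linarith
  · subst hk; simp; linarith
  · simp [hk]; linarith

open Filter Set Topology

lemma tendsto_quot_right {n : ℕ} {F : (Fin n → ℝ) → ℝ} {gradF : (Fin n → ℝ) → Fin n → ℝ}
    (hgrad : HasGradientOnBox F gradF) {z : Fin n → ℝ} (hz : z ∈ Set.Icc (0:Fin n → ℝ) 1)
    {i : Fin n} (hzi : z i < 1) :
    Tendsto (fun a : ℝ => (F (z + a • (Pi.single i 1 : Fin n → ℝ)) - F z) / a)
      (𝓝[>] (0:ℝ)) (𝓝 (gradF z i)) := by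
  set e : Fin n → ℝ := Pi.single i 1 with he
  have hε : (0:ℝ) < 1 - z i := by linarith
  have hpath : HasDerivWithinAt (fun a : ℝ => z + a • e) e (Set.Icc 0 (1 - z i)) 0 := by
    simpa using ((((hasDerivAt_id (0:ℝ)).smul_const e).const_add z).hasDerivWithinAt
      (s := Set.Icc 0 (1 - z i)))
  have hmaps : Set.MapsTo (fun a : ℝ => z + a • e) (Set.Icc 0 (1 - z i))
      (Set.Icc (0:Fin n → ℝ) 1) := fun a ha => mem_box_add hz ha.1 (by linarith [ha.2])
  have hF : HasFDerivWithinAt F (gradCLM (gradF z)) (Set.Icc (0:Fin n → ℝ) 1)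
      ((fun a : ℝ => z + a • e) 0) := by simpa using hgrad z hz
  have hcomp := hF.comp_hasDerivWithinAt (0:ℝ) hpath hmaps
  rw [gradCLM_single] at hcomp
  rw [hasDerivWithinAt_iff_tendsto_slope] at hcomp
  rw [Set.Icc_diff_left, nhdsWithin_Ioc_eq_nhdsGT hε] at hcomp
  refine hcomp.congr fun a => ?_
  simp [slope_def_field, Function.comp]

lemma tendsto_quot_left {n : ℕ} {F : (Fin n → ℝ) → ℝ} {gradF : (Fin n → ℝ) → Fin n → ℝ}
    (hgrad : HasGradientOnBox F gradF) {z : Fin n → ℝ} (hz : z ∈ Set.Icc (0:Fin n → ℝ) 1)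
    {i : Fin n} (hzi : 0 < z i) :
    Tendsto (fun a : ℝ => (F z - F (z - a • (Pi.single i 1 : Fin n → ℝ))) / a)
      (𝓝[>] (0:ℝ)) (𝓝 (gradF z i)) := by
  set e : Fin n → ℝ := Pi.single i 1 with he
  have hpath : HasDerivWithinAt (fun a : ℝ => z + a • (-e)) (-e) (Set.Icc 0 (z i)) 0 := by
    simpa using ((((hasDerivAt_id (0:ℝ)).smul_const (-e)).const_add z).hasDerivWithinAt
      (s := Set.Icc 0 (z i)))
  have hmaps : Set.MapsTo (fun a : ℝ => z + a • (-e)) (Set.Icc 0 (z i))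
      (Set.Icc (0:Fin n → ℝ) 1) := by
    intro a ha
    have : z + a • (-e) = z - a • e := by module
    simp only []; rw [this]
    exact mem_box_sub hz ha.1 ha.2
  have hF : HasFDerivWithinAt F (gradCLM (gradF z)) (Set.Icc (0:Fin n → ℝ) 1)
      ((fun a : ℝ => z + a • (-e)) 0) := by simpa using hgrad z hz
  have hcomp := hF.comp_hasDerivWithinAt (0:ℝ) hpath hmaps
  have hval : gradCLM (gradF z) (-e) = -(gradF z i) := by
    rw [map_neg, gradCLM_single]
  rw [hval] at hcomp
  rw [hasDerivWithinAt_iff_tendsto_slope] at hcomp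
  rw [Set.Icc_diff_left, nhdsWithin_Ioc_eq_nhdsGT hzi] at hcomp
  have := hcomp.neg
  rw [neg_neg] at this
  refine this.congr fun a => ?_
  have h1 : z + a • (-e) = z - a • e := by module
  simp [slope_def_field, Function.comp, h1]
  ring_nf

lemma grad_mono {n : ℕ} {F : (Fin n → ℝ) → ℝ} {gradF : (Fin n → ℝ) → Fin n → ℝ}
    (hDR : DRSubmodular F) (hgrad : HasGradientOnBox F gradF)
    {u w : Fin n → ℝ} (hu : u ∈ Set.Icc (0:Fin n → ℝ) 1) (hw : w ∈ Set.Icc (0:Fin n → ℝ) 1)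
    (huw : u ≤ w) (i : Fin n) : gradF w i ≤ gradF u i := by
  rcases lt_or_ge (w i) 1 with hw1 | hw1
  · have hu1 : u i < 1 := lt_of_le_of_lt (huw i) hw1
    refine le_of_tendsto_of_tendsto (tendsto_quot_right hgrad hw hw1)
      (tendsto_quot_right hgrad hu hu1) ?_
    filter_upwards [Ioo_mem_nhdsGT_of_mem
      (Set.left_mem_Ico.2 (by linarith : (0:ℝ) < 1 - w i))] with a ha
    have h1 : u i + a ≤ 1 := by have := huw i; linarith [ha.2]
    have h2 : w i + a ≤ 1 := by linarith [ha.2]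
    have := hDR u w hu hw huw i a ha.1 (mem_box_add hu ha.1.le h1) (mem_box_add hw ha.1.le h2)
    exact div_le_div_of_nonneg_right this ha.1.le
  · have hwi : w i = 1 := le_antisymm (hw.2 i) hw1
    rcases lt_or_ge (u i) 1 with hu1 | hu1
    · have hw0 : (0:ℝ) < w i := by rw [hwi]; norm_num
      refine le_of_tendsto_of_tendsto (tendsto_quot_left hgrad hw hw0)
        (tendsto_quot_right hgrad hu hu1) ?_
      filter_upwards [Ioo_mem_nhdsGT_of_mem
        (Set.left_mem_Ico.2 (by linarith : (0:ℝ) < 1 - u i))] with a ha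
      have hyb : w - a • (Pi.single i 1 : Fin n → ℝ) ∈ Set.Icc (0:Fin n → ℝ) 1 :=
        mem_box_sub hw ha.1.le
          (by rw [hwi]; have : (0:ℝ) ≤ u i := hu.1 i; linarith [ha.2])
      have hxy : u ≤ w - a • (Pi.single i 1 : Fin n → ℝ) := by
        intro k
        by_cases hk : k = i
        · subst hk
          have : (w - a • (Pi.single k 1 : Fin n → ℝ)) k = w k - a := by
            simp [Pi.single_apply]
          rw [this, hwi]
          linarith [ha.2]
        · have : (w - a • (Pi.single i 1 : Fin n → ℝ)) k = w k := by
            simp [Pi.single_apply, hk]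
          rw [this]
          exact huw k
      have hyadd : w - a • (Pi.single i 1 : Fin n → ℝ) + a • (Pi.single i 1 : Fin n → ℝ) = w := by
        module
      have hkey := hDR u (w - a • (Pi.single i 1 : Fin n → ℝ)) hu hyb hxy i a ha.1
        (mem_box_add hu ha.1.le (by linarith [ha.2]))
        (by rw [hyadd]; exact hw)
      rw [hyadd] at hkey
      exact div_le_div_of_nonneg_right hkey ha.1.le
    · have hui : u i = 1 := le_antisymm (hu.2 i) hu1
      have hw0 : (0:ℝ) < w i := by rw [hwi]; norm_num
      have hu0 : (0:ℝ) < u i := by rw [hui]; norm_num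
      refine le_of_tendsto_of_tendsto (tendsto_quot_left hgrad hw hw0)
        (tendsto_quot_left hgrad hu hu0) ?_
      filter_upwards [Ioo_mem_nhdsGT_of_mem
        (Set.left_mem_Ico.2 (by norm_num : (0:ℝ) < 1))] with a ha
      have hxb : u - a • (Pi.single i 1 : Fin n → ℝ) ∈ Set.Icc (0:Fin n → ℝ) 1 :=
        mem_box_sub hu ha.1.le (by rw [hui]; linarith [ha.2])
      have hyb : w - a • (Pi.single i 1 : Fin n → ℝ) ∈ Set.Icc (0:Fin n → ℝ) 1 :=
        mem_box_sub hw ha.1.le (by rw [hwi]; linarith [ha.2])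
      have hxy : u - a • (Pi.single i 1 : Fin n → ℝ) ≤ w - a • (Pi.single i 1 : Fin n → ℝ) := by
        intro k; simp only [Pi.sub_apply]; linarith [huw k]
      have hxadd : u - a • (Pi.single i 1 : Fin n → ℝ) + a • (Pi.single i 1 : Fin n → ℝ) = u := by
        module
      have hyadd : w - a • (Pi.single i 1 : Fin n → ℝ) + a • (Pi.single i 1 : Fin n → ℝ) = w := by
        module
      have hkey := hDR _ _ hxb hyb hxy i a ha.1 (by rw [hxadd]; exact hu) (by rw [hyadd]; exact hw)
      rw [hxadd, hyadd] at hkey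
      exact div_le_div_of_nonneg_right hkey ha.1.le

section Seg

variable {n : ℕ} {F : (Fin n → ℝ) → ℝ} {gradF : (Fin n → ℝ) → Fin n → ℝ}
  (hgrad : HasGradientOnBox F gradF)

lemma seg_mem {z d : Fin n → ℝ} (hz : z ∈ Set.Icc (0:Fin n → ℝ) 1)
    (hzd : z + d ∈ Set.Icc (0:Fin n → ℝ) 1) {t : ℝ} (ht : t ∈ Set.Icc (0:ℝ) 1) :
    z + t • d ∈ Set.Icc (0:Fin n → ℝ) 1 := by
  have h : z + t • d = (1 - t) • z + t • (z + d) := by module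
  rw [h]
  exact (convex_Icc (0:Fin n → ℝ) 1) hz hzd (by linarith [ht.2]) ht.1 (by ring)

include hgrad in
lemma seg_deriv {z d : Fin n → ℝ} (hz : z ∈ Set.Icc (0:Fin n → ℝ) 1)
    (hzd : z + d ∈ Set.Icc (0:Fin n → ℝ) 1) {t : ℝ} (ht : t ∈ Set.Icc (0:ℝ) 1) :
    HasDerivWithinAt (fun s : ℝ => F (z + s • d))
      (∑ i, gradF (z + t • d) i * d i) (Set.Icc 0 1) t := by
  have hpath : HasDerivWithinAt (fun s : ℝ => z + s • d) d (Set.Icc 0 1) t := by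
    simpa using ((((hasDerivAt_id t).smul_const d).const_add z).hasDerivWithinAt
      (s := Set.Icc (0:ℝ) 1))
  have hmaps : Set.MapsTo (fun s : ℝ => z + s • d) (Set.Icc 0 1)
      (Set.Icc (0:Fin n → ℝ) 1) := fun s hs => seg_mem hz hzd hs
  have hF : HasFDerivWithinAt F (gradCLM (gradF (z + t • d))) (Set.Icc (0:Fin n → ℝ) 1)
      ((fun s : ℝ => z + s • d) t) := hgrad _ (seg_mem hz hzd ht)
  have := hF.comp_hasDerivWithinAt t hpath hmaps
  rwa [gradCLM_apply] at this

include hgrad in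
lemma seg_mvt {z d : Fin n → ℝ} (hz : z ∈ Set.Icc (0:Fin n → ℝ) 1)
    (hzd : z + d ∈ Set.Icc (0:Fin n → ℝ) 1) {a b : ℝ} (ha : 0 ≤ a) (hab : a < b) (hb : b ≤ 1) :
    ∃ ξ ∈ Set.Ioo a b,
      F (z + b • d) - F (z + a • d) = (b - a) * ∑ i, gradF (z + ξ • d) i * d i := by
  have hsub : Set.Icc a b ⊆ Set.Icc (0:ℝ) 1 := Set.Icc_subset_Icc ha hb
  have hcont : ContinuousOn (fun s : ℝ => F (z + s • d)) (Set.Icc a b) :=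
    fun t htm => ((seg_deriv hgrad hz hzd (hsub htm)).continuousWithinAt).mono hsub
  have hdiff : ∀ t ∈ Set.Ioo a b, HasDerivAt (fun s : ℝ => F (z + s • d))
      (∑ i, gradF (z + t • d) i * d i) t := by
    intro t htm
    have htm' : t ∈ Set.Icc (0:ℝ) 1 := ⟨by linarith [htm.1], by linarith [htm.2]⟩
    exact (seg_deriv hgrad hz hzd htm').hasDerivAt
      (Icc_mem_nhds (by linarith [htm.1]) (by linarith [htm.2]))
  obtain ⟨ξ, hξ, heq⟩ := exists_hasDerivAt_eq_slope (fun s : ℝ => F (z + s • d))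
    (fun t => ∑ i, gradF (z + t • d) i * d i) hab hcont hdiff
  refine ⟨ξ, hξ, ?_⟩
  rw [heq]
  have : b - a ≠ 0 := by linarith
  field_simp

variable (hmono : ∀ u w : Fin n → ℝ, u ∈ Set.Icc (0:Fin n → ℝ) 1 →
    w ∈ Set.Icc (0:Fin n → ℝ) 1 → u ≤ w → ∀ i, gradF w i ≤ gradF u i)

include hmono in
lemma sum_grad_mono {z d : Fin n → ℝ} (hz : z ∈ Set.Icc (0:Fin n → ℝ) 1)
    (hzd : z + d ∈ Set.Icc (0:Fin n → ℝ) 1) (hd : 0 ≤ d) {t t' : ℝ}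
    (ht : t ∈ Set.Icc (0:ℝ) 1) (ht' : t' ∈ Set.Icc (0:ℝ) 1) (htt' : t ≤ t') :
    ∑ i, gradF (z + t' • d) i * d i ≤ ∑ i, gradF (z + t • d) i * d i := by
  refine Finset.sum_le_sum fun i _ => mul_le_mul_of_nonneg_right ?_ (hd i)
  refine hmono _ _ (seg_mem hz hzd ht) (seg_mem hz hzd ht') ?_ i
  intro k
  simp only [Pi.add_apply, Pi.smul_apply, smul_eq_mul]
  have := mul_le_mul_of_nonneg_right htt' (hd k)
  linarith

include hgrad hmono in
lemma grad_upper {z d : Fin n → ℝ} (hz : z ∈ Set.Icc (0:Fin n → ℝ) 1)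
    (hzd : z + d ∈ Set.Icc (0:Fin n → ℝ) 1) (hd : 0 ≤ d) :
    F (z + d) - F z ≤ ∑ i, gradF z i * d i := by
  obtain ⟨ξ, hξ, heq⟩ := seg_mvt hgrad hz hzd (le_refl (0:ℝ)) one_pos (le_refl (1:ℝ))
  have hb := sum_grad_mono hmono hz hzd hd (Set.left_mem_Icc.2 zero_le_one)
    ⟨hξ.1.le, hξ.2.le⟩ hξ.1.le
  simp only [one_smul, zero_smul, add_zero] at heq hb
  linarith

include hgrad hmono in
lemma grad_lower {z d : Fin n → ℝ} (hz : z ∈ Set.Icc (0:Fin n → ℝ) 1)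
    (hzd : z + d ∈ Set.Icc (0:Fin n → ℝ) 1) (hd : 0 ≤ d) :
    ∑ i, gradF (z + d) i * d i ≤ F (z + d) - F z := by
  obtain ⟨ξ, hξ, heq⟩ := seg_mvt hgrad hz hzd (le_refl (0:ℝ)) one_pos (le_refl (1:ℝ))
  have hb := sum_grad_mono hmono hz hzd hd ⟨hξ.1.le, hξ.2.le⟩
    (Set.right_mem_Icc.2 zero_le_one) hξ.2.le
  simp only [one_smul, zero_smul, add_zero] at heq hb
  linarith

include hgrad hmono in
lemma concave_seg {z d : Fin n → ℝ} (hz : z ∈ Set.Icc (0:Fin n → ℝ) 1)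
    (hzd : z + d ∈ Set.Icc (0:Fin n → ℝ) 1) (hd : 0 ≤ d) {m : ℝ} (hm : m ∈ Set.Icc (0:ℝ) 1) :
    (1 - m) * F z + m * F (z + d) ≤ F (z + m • d) := by
  rcases eq_or_lt_of_le hm.1 with hm0 | hm0
  · subst hm0; simp
  rcases eq_or_lt_of_le hm.2 with hm1 | hm1
  · subst hm1; simp
  obtain ⟨ξ₁, hξ₁, heq₁⟩ := seg_mvt hgrad hz hzd (le_refl (0:ℝ)) hm0 hm.2
  obtain ⟨ξ₂, hξ₂, heq₂⟩ := seg_mvt hgrad hz hzd hm.1 hm1 (le_refl (1:ℝ))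
  have hξ₁m : ξ₁ ∈ Set.Icc (0:ℝ) 1 := ⟨hξ₁.1.le, le_trans hξ₁.2.le hm.2⟩
  have hξ₂m : ξ₂ ∈ Set.Icc (0:ℝ) 1 := ⟨le_trans hm.1 hξ₂.1.le, hξ₂.2.le⟩
  have hS := sum_grad_mono hmono hz hzd hd hξ₁m hξ₂m (le_trans hξ₁.2.le hξ₂.1.le)
  simp only [one_smul, zero_smul, add_zero] at heq₁ heq₂
  have hpos : (0:ℝ) ≤ m * (1 - m) := by nlinarith
  have := mul_le_mul_of_nonneg_left hS hpos
  nlinarith [this, heq₁, heq₂]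

lemma sup_mem_box {x y : Fin n → ℝ} (hx : x ∈ Set.Icc (0:Fin n → ℝ) 1)
    (hy : y ∈ Set.Icc (0:Fin n → ℝ) 1) : x ⊔ y ∈ Set.Icc (0:Fin n → ℝ) 1 := by
  constructor <;> intro k <;> simp only [Pi.sup_apply, Pi.zero_apply, Pi.one_apply]
  · exact le_trans (hx.1 k) le_sup_left
  · exact sup_le (hx.2 k) (hy.2 k)

lemma inf_mem_box {x y : Fin n → ℝ} (hx : x ∈ Set.Icc (0:Fin n → ℝ) 1)
    (hy : y ∈ Set.Icc (0:Fin n → ℝ) 1) : x ⊓ y ∈ Set.Icc (0:Fin n → ℝ) 1 := by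
  constructor <;> intro k <;> simp only [Pi.inf_apply, Pi.zero_apply, Pi.one_apply]
  · exact le_inf (hx.1 k) (hy.1 k)
  · exact le_trans inf_le_left (hx.2 k)

include hgrad hmono in
lemma sup_bound (hFnn : ∀ z ∈ Set.Icc (0:Fin n → ℝ) 1, 0 ≤ F z)
    {x y : Fin n → ℝ} (hx : x ∈ Set.Icc (0:Fin n → ℝ) 1) (hy : y ∈ Set.Icc (0:Fin n → ℝ) 1)
    {m : ℝ} (hm0 : 0 ≤ m) (hxm : ∀ i, x i ≤ m) :
    (1 - m) * F y ≤ F (x ⊔ y) := by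
  have hsup := sup_mem_box hx hy
  rcases le_or_gt 1 m with hm1 | hm1
  · nlinarith [hFnn y hy, hFnn _ hsup]
  rcases eq_or_lt_of_le hm0 with hm0' | hm0'
  · have hxy : x ≤ y := by
      intro k
      have h1 : x k ≤ 0 := by rw [hm0']; exact hxm k
      exact le_trans h1 (hy.1 k)
    rw [sup_eq_right.2 hxy]
    nlinarith [hFnn y hy]
  · set d : Fin n → ℝ := m⁻¹ • (x ⊔ y - y) with hd
    have hd0 : (0:Fin n → ℝ) ≤ d := by
      intro k
      show (0:ℝ) ≤ m⁻¹ * (x k ⊔ y k - y k)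
      have h1 : y k ≤ x k ⊔ y k := le_sup_right
      exact mul_nonneg (inv_nonneg.2 hm0) (by linarith)
    have hyd : y + d ∈ Set.Icc (0:Fin n → ℝ) 1 := by
      constructor <;> intro k
      · have h1 := hd0 k
        have h2 : (0:ℝ) ≤ y k := hy.1 k
        show (0:ℝ) ≤ y k + d k
        have h1' : (0:ℝ) ≤ d k := h1
        linarith
      · show y k + m⁻¹ * (x k ⊔ y k - y k) ≤ 1
        have hkey : x k ⊔ y k - y k ≤ m * (1 - y k) := by
          have hy1 : y k ≤ 1 := hy.2 k
          have hy0 : (0:ℝ) ≤ y k := hy.1 k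
          rcases le_total (x k) (y k) with h | h
          · rw [sup_eq_right.2 h]; nlinarith
          · rw [sup_eq_left.2 h]; nlinarith [hxm k]
        have h2 := mul_le_mul_of_nonneg_left hkey (inv_nonneg.2 hm0)
        rw [inv_mul_cancel_left₀ (ne_of_gt hm0')] at h2
        have hy1 : y k ≤ 1 := hy.2 k
        linarith
    have happ := concave_seg hgrad hmono hy hyd hd0 ⟨hm0, hm1.le⟩
    have hmd : y + m • d = x ⊔ y := by
      rw [hd, smul_smul, mul_inv_cancel₀ (ne_of_gt hm0'), one_smul]
      abel
    rw [hmd] at happ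
    have h3 : (0:ℝ) ≤ m * F (y + d) := mul_nonneg hm0 (hFnn _ hyd)
    linarith

include hgrad hmono in
lemma key_inner {x y : Fin n → ℝ} (hx : x ∈ Set.Icc (0:Fin n → ℝ) 1)
    (hy : y ∈ Set.Icc (0:Fin n → ℝ) 1) :
    F (x ⊔ y) + F (x ⊓ y) - 2 * F x ≤ ∑ i, gradF x i * (y i - x i) := by
  have hsup := sup_mem_box hx hy
  have hinf := inf_mem_box hx hy
  have e1 : x + (x ⊔ y - x) = x ⊔ y := by abel
  have e2 : (x ⊓ y) + (x - x ⊓ y) = x := by abel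
  have hd1 : (0:Fin n → ℝ) ≤ x ⊔ y - x := by
    intro k; show (0:ℝ) ≤ x k ⊔ y k - x k
    have : x k ≤ x k ⊔ y k := le_sup_left
    linarith
  have hd2 : (0:Fin n → ℝ) ≤ x - x ⊓ y := by
    intro k; show (0:ℝ) ≤ x k - x k ⊓ y k
    have : x k ⊓ y k ≤ x k := inf_le_left
    linarith
  have h1 := grad_upper hgrad hmono hx (by rw [e1]; exact hsup) hd1
  have h2 := grad_lower hgrad hmono hinf (by rw [e2]; exact hx) hd2
  rw [e1] at h1
  rw [e2] at h2
  have hsplit : ∑ i, gradF x i * (y i - x i)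
      = (∑ i, gradF x i * (x ⊔ y - x) i) - ∑ i, gradF x i * (x - x ⊓ y) i := by
    rw [← Finset.sum_sub_distrib]
    refine Finset.sum_congr rfl fun i _ => ?_
    have : x i ⊔ y i + x i ⊓ y i = x i + y i := max_add_min (x i) (y i)
    show gradF x i * (y i - x i)
      = gradF x i * (x i ⊔ y i - x i) - gradF x i * (x i - x i ⊓ y i)
    linear_combination (- gradF x i) * this
  rw [hsplit]
  linarith

end Seg

lemma harmonicNum_nonneg (j : ℕ) : 0 ≤ harmonicNum j := by
  unfold harmonicNum; positivity

lemma harmonicNum_succ (j : ℕ) : harmonicNum (j+1) = harmonicNum j + 1 / ((j:ℝ)+1) := by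
  unfold harmonicNum; rw [Finset.sum_range_succ]

lemma harmonicNum_mono {j T : ℕ} (h : j ≤ T) : harmonicNum j ≤ harmonicNum T := by
  unfold harmonicNum
  refine Finset.sum_le_sum_of_subset_of_nonneg (Finset.range_subset_range.2 h) fun k _ _ => by positivity

lemma one_le_harmonicNum {T : ℕ} (h : 1 ≤ T) : 1 ≤ harmonicNum T := by
  have h1 : harmonicNum 1 = 1 := by simp [harmonicNum]
  rw [← h1]; exact harmonicNum_mono h

section Main

variable {T : ℕ} (hT : 1 ≤ T)

include hT in
lemma fwRatio_eq {j : ℕ} (hj : j + 1 ≤ T) :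
    fwRatio T j = (1 + harmonicNum j / harmonicNum T) / (1 + harmonicNum (j+1) / harmonicNum T) := by
  have hH : (0:ℝ) < harmonicNum T := lt_of_lt_of_le one_pos (one_le_harmonicNum hT)
  have hs : ∀ k : ℕ, k ≤ T → Real.log (1 + harmonicNum k / harmonicNum T) < 1 := by
    intro k hk
    have hd : (0:ℝ) ≤ harmonicNum k / harmonicNum T :=
      div_nonneg (harmonicNum_nonneg k) hH.le
    have h1 : (0:ℝ) < 1 + harmonicNum k / harmonicNum T := by linarith
    have h2 : 1 + harmonicNum k / harmonicNum T ≤ 2 := by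
      have h3 := (div_le_one hH).2 (harmonicNum_mono hk)
      linarith
    calc Real.log (1 + harmonicNum k / harmonicNum T) ≤ Real.log 2 := by
          exact Real.log_le_log h1 h2
      _ < 1 := by linarith [Real.log_two_lt_d9]
  have hj' : j ≤ T := Nat.le_of_succ_le hj
  have e1 : 1 + fwTime T j = 1 / (1 - Real.log (1 + harmonicNum j / harmonicNum T)) := by
    unfold fwTime; ring
  have e2 : 1 + fwTime T (j+1) = 1 / (1 - Real.log (1 + harmonicNum (j+1) / harmonicNum T)) := by
    unfold fwTime; ring
  have p1 : (0:ℝ) < 1 - Real.log (1 + harmonicNum j / harmonicNum T) := by linarith [hs j hj']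
  have p2 : (0:ℝ) < 1 - Real.log (1 + harmonicNum (j+1) / harmonicNum T) := by
    linarith [hs (j+1) hj]
  have q1 : (0:ℝ) < 1 + harmonicNum j / harmonicNum T := by
    have := div_nonneg (harmonicNum_nonneg j) hH.le; linarith
  have q2 : (0:ℝ) < 1 + harmonicNum (j+1) / harmonicNum T := by
    have := div_nonneg (harmonicNum_nonneg (j+1)) hH.le; linarith
  unfold fwRatio
  rw [e1, e2, one_div_one_div, one_div_one_div]
  rw [show -(1 - Real.log (1 + harmonicNum j / harmonicNum T))
      + (1 - Real.log (1 + harmonicNum (j+1) / harmonicNum T))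
      = Real.log (1 + harmonicNum j / harmonicNum T)
        - Real.log (1 + harmonicNum (j+1) / harmonicNum T) by ring]
  rw [Real.exp_sub, Real.exp_log q1, Real.exp_log q2]

end Main

lemma arith_step (A B Fs R W sj δ : ℝ)
    (hA0 : 0 ≤ A) (hFs0 : 0 ≤ Fs) (hR0 : 0 ≤ R) (hW0 : 0 ≤ W)
    (hsj : 1 ≤ sj) (hδ0 : 0 ≤ δ) (hδ1 : δ ≤ 1)
    (ih : (sj - 1) * Fs - R ≤ sj^2 * A)
    (key : (sj+δ)^2*A + (sj+δ)*δ*(1/sj*Fs - 2*A) - W*δ^2 ≤ (sj+δ)^2 * B) :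
    (sj + δ - 1) * Fs - (R + W*δ^2) ≤ (sj+δ)^2 * B := by
  have hsjpos : (0:ℝ) < sj := by linarith
  have hδsj : δ ≤ sj := by linarith
  have hp : (0:ℝ) ≤ 1 - δ^2/sj^2 := by
    rw [sub_nonneg, div_le_one (by positivity)]
    nlinarith
  have m1 := mul_le_mul_of_nonneg_left ih hp
  have e5 : (1 - δ^2/sj^2) * (sj^2*A) = (sj^2 - δ^2)*A := by
    field_simp
  have e6 : (sj+δ)*δ*(1/sj*Fs) = δ*Fs + δ^2/sj*Fs := by
    field_simp
  have e7 : δ^2/sj*Fs - (δ^2/sj^2)*((sj-1)*Fs) = (δ^2*Fs)/sj^2 := by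
    field_simp; ring
  have e8 : (0:ℝ) ≤ (δ^2*Fs)/sj^2 := by positivity
  have e9 : (0:ℝ) ≤ (δ^2/sj^2) * R := by positivity
  nlinarith [m1, key, e5, e6, e7, e8, e9]


set_option maxHeartbeats 1600000 in
/-- If additionally `L ≤ c n² F(x*)` for a constant `c > 0` (as for the
multilinear extension of a submodular set function), then
`max_{0 ≤ j ≤ T} F(x(t_j)) ≥ (1/4 - (c/8) n³ H_{2,T}/H_T²) F(x*)`. -/
theorem fw_best_iterate_multilinear_bound
    (n : ℕ) (F : (Fin n → ℝ) → ℝ) (gradF : (Fin n → ℝ) → Fin n → ℝ)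
    (L : ℝ) (hL : 0 ≤ L)
    (hFnonneg : ∀ z ∈ Set.Icc (0 : Fin n → ℝ) 1, 0 ≤ F z)
    (hDR : DRSubmodular F)
    (hgrad : HasGradientOnBox F gradF)
    (hsmooth : ∀ z ∈ Set.Icc (0 : Fin n → ℝ) 1, ∀ w ∈ Set.Icc (0 : Fin n → ℝ) 1,
      |F w - F z - ∑ i, gradF z i * (w i - z i)| ≤ L / 2 * ∑ i, (w i - z i) ^ 2)
    (P : Set (Fin n → ℝ)) (hPsub : P ⊆ Set.Icc 0 1) (hPconv : Convex ℝ P)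
    (h0P : (0 : Fin n → ℝ) ∈ P)
    (xstar : Fin n → ℝ) (hxstarP : xstar ∈ P) (hxstarMax : ∀ z ∈ P, F z ≤ F xstar)
    (T : ℕ) (hT : 1 ≤ T)
    (x v : ℕ → Fin n → ℝ)
    (hx0 : x 0 = 0)
    (hvP : ∀ j < T, v j ∈ P)
    (hvmax : ∀ j < T, ∀ w ∈ P, ∑ i, gradF (x j) i * w i ≤ ∑ i, gradF (x j) i * v j i)
    (hstep : ∀ j < T, x (j + 1) = fwRatio T j • x j + (1 - fwRatio T j) • v j)
    (hF0 : F 0 = 0)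
    (c : ℝ) (hc : 0 < c) (hLc : L ≤ c * (n : ℝ) ^ 2 * F xstar) :
    ∃ j ≤ T, F (x j) ≥
      (1 / 4 - c / 8 * (n : ℝ) ^ 3 * (harmonicNum2 T / harmonicNum T ^ 2)) * F xstar := by
  have hH1 : (1:ℝ) ≤ harmonicNum T := one_le_harmonicNum hT
  have hHpos : (0:ℝ) < harmonicNum T := by linarith
  set H := harmonicNum T with hHdef
  set s : ℕ → ℝ := fun j => 1 + harmonicNum j / H with hsdef
  have hs0 : s 0 = 1 := by simp [hsdef, harmonicNum]
  have hs1 : ∀ j, 1 ≤ s j := fun j => by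
    have := div_nonneg (harmonicNum_nonneg j) hHpos.le
    simp only [hsdef]; linarith
  have hspos : ∀ j, (0:ℝ) < s j := fun j => lt_of_lt_of_le one_pos (hs1 j)
  have hsd : ∀ k : ℕ, s (k+1) - s k = 1 / (((k:ℝ) + 1) * H) := by
    intro k
    simp only [hsdef, harmonicNum_succ]
    have hk1 : ((k:ℝ) + 1) ≠ 0 := by positivity
    field_simp
    ring
  have hδ0 : ∀ k, 0 ≤ s (k+1) - s k := fun k => by
    rw [hsd k]; positivity
  have hsmono : ∀ k, s k ≤ s (k+1) := fun k => by linarith [hδ0 k]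
  have hδle1 : ∀ k, s (k+1) - s k ≤ 1 := by
    intro k
    rw [hsd k, div_le_one (by positivity)]
    nlinarith [Nat.cast_nonneg (α := ℝ) k]
  have hsT : s T = 2 := by
    simp only [hsdef, ← hHdef]
    rw [div_self (ne_of_gt hHpos)]; norm_num
  have hratio : ∀ j, j + 1 ≤ T → fwRatio T j = s j / s (j+1) := by
    intro j hj; rw [fwRatio_eq hT hj]
  have hρ0 : ∀ j, 0 < fwRatio T j := fun j => Real.exp_pos _
  have hρ1 : ∀ j, j + 1 ≤ T → fwRatio T j ≤ 1 := by
    intro j hj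
    rw [hratio j hj, div_le_one (hspos (j+1))]
    exact hsmono j
  have hmono : ∀ u w : Fin n → ℝ, u ∈ Set.Icc (0:Fin n → ℝ) 1 →
      w ∈ Set.Icc (0:Fin n → ℝ) 1 → u ≤ w → ∀ i, gradF w i ≤ gradF u i :=
    fun u w hu hw huw i => grad_mono hDR hgrad hu hw huw i
  have hxP : ∀ j, j ≤ T → x j ∈ P := by
    intro j
    induction j with
    | zero => intro _; rw [hx0]; exact h0P
    | succ k ih =>
      intro hk
      have hkT : k < T := hk
      rw [hstep k hkT]
      refine hPconv (ih hkT.le) (hvP k hkT) (hρ0 k).le ?_ (by ring)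
      linarith [hρ1 k hk]
  have hxbox : ∀ j, j ≤ T → x j ∈ Set.Icc (0:Fin n → ℝ) 1 := fun j hj => hPsub (hxP j hj)
  have hvbox : ∀ j, j < T → v j ∈ Set.Icc (0:Fin n → ℝ) 1 := fun j hj => hPsub (hvP j hj)
  have hxle : ∀ j, j ≤ T → ∀ i, x j i ≤ 1 - 1 / s j := by
    intro j
    induction j with
    | zero => intro _ i; rw [hx0]; simp [hs0]
    | succ k ih =>
      intro hk i
      have hkT : k < T := hk
      have hki := ih hkT.le i
      have hvi : v k i ≤ 1 := (hvbox k hkT).2 i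
      have hρb := hρ1 k hk
      rw [hstep k hkT]
      simp only [Pi.add_apply, Pi.smul_apply, smul_eq_mul]
      have heq : fwRatio T k * (1 / s k) = 1 / s (k+1) := by
        rw [hratio k hk, div_mul_div_comm, mul_one,
          div_eq_div_iff (ne_of_gt (mul_pos (hspos (k+1)) (hspos k))) (ne_of_gt (hspos (k+1)))]
        ring
      have m1 := mul_le_mul_of_nonneg_left hki (hρ0 k).le
      have m2 := mul_le_mul_of_nonneg_left hvi (by linarith : (0:ℝ) ≤ 1 - fwRatio T k)
      nlinarith [m1, m2, heq]
  have hFx : ∀ j, j ≤ T → 0 ≤ F (x j) := fun j hj => hFnonneg _ (hxbox j hj)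
  have hFs0 : 0 ≤ F xstar := hFnonneg _ (hPsub hxstarP)
  -- main induction
  have main : ∀ j, j ≤ T →
      (s j - 1) * F xstar - L * (n:ℝ) / 2 * ∑ k ∈ Finset.range j, (s (k+1) - s k)^2
        ≤ (s j)^2 * F (x j) := by
    intro j
    induction j with
    | zero =>
      intro _
      rw [hx0, hF0]
      simp [hs0]
    | succ j ih =>
      intro hj1
      have hjT : j < T := hj1
      have ihj := ih hjT.le
      have hργ := hratio j hj1
      have hγ0 : (0:ℝ) ≤ 1 - fwRatio T j := by linarith [hρ1 j hj1]
      have hqpos := hspos (j+1)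
      have hsjpos := hspos j
      have hqγ : s (j+1) * (1 - fwRatio T j) = s (j+1) - s j := by
        rw [hργ]; field_simp
      have hsm := hsmooth (x j) (hxbox j hjT.le) (x (j+1)) (hxbox (j+1) hj1)
      have hsm1 : -(L / 2 * ∑ i, (x (j+1) i - x j i)^2)
          ≤ F (x (j+1)) - F (x j) - ∑ i, gradF (x j) i * (x (j+1) i - x j i) :=
        (abs_le.1 hsm).1
      have hΔ : ∀ i, x (j+1) i - x j i = (1 - fwRatio T j) * (v j i - x j i) := by
        intro i
        rw [hstep j hjT]
        simp only [Pi.add_apply, Pi.smul_apply, smul_eq_mul]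
        ring
      have hsum1 : ∑ i, gradF (x j) i * (x (j+1) i - x j i)
          = (1 - fwRatio T j) * ∑ i, gradF (x j) i * (v j i - x j i) := by
        rw [Finset.mul_sum]
        exact Finset.sum_congr rfl fun i _ => by rw [hΔ i]; ring
      have hSl : 1 / s j * F xstar - 2 * F (x j) ≤ ∑ i, gradF (x j) i * (v j i - x j i) := by
        have hv := hvmax j hjT xstar hxstarP
        have hki := key_inner hgrad hmono (hxbox j hjT.le) (hPsub hxstarP)
        have hm0 : (0:ℝ) ≤ 1 - 1 / s j := by
          have : 1 / s j ≤ 1 := by rw [div_le_one hsjpos]; exact hs1 j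
          linarith
        have hsb := sup_bound hgrad hmono hFnonneg (hxbox j hjT.le) (hPsub hxstarP) hm0
          (hxle j hjT.le)
        have h1m : 1 - (1 - 1 / s j) = 1 / s j := by ring
        rw [h1m] at hsb
        have hinf : 0 ≤ F (x j ⊓ xstar) :=
          hFnonneg _ (inf_mem_box (hxbox j hjT.le) (hPsub hxstarP))
        have hsplit : ∑ i, gradF (x j) i * (v j i - x j i)
            = (∑ i, gradF (x j) i * v j i) - ∑ i, gradF (x j) i * x j i := by
          rw [← Finset.sum_sub_distrib]
          exact Finset.sum_congr rfl fun i _ => by ring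
        have hsplit2 : ∑ i, gradF (x j) i * (xstar i - x j i)
            = (∑ i, gradF (x j) i * xstar i) - ∑ i, gradF (x j) i * x j i := by
          rw [← Finset.sum_sub_distrib]
          exact Finset.sum_congr rfl fun i _ => by ring
        rw [hsplit]
        rw [hsplit2] at hki
        linarith
      have hΔsq : ∑ i, (x (j+1) i - x j i)^2 ≤ (1 - fwRatio T j)^2 * (n:ℝ) := by
        calc ∑ i, (x (j+1) i - x j i)^2 ≤ ∑ _i : Fin n, (1 - fwRatio T j)^2 := by
              refine Finset.sum_le_sum fun i _ => ?_
              rw [hΔ i, mul_pow]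
              have h1 : (v j i - x j i)^2 ≤ 1 := by
                have e1 : (0:ℝ) ≤ v j i := (hvbox j hjT).1 i
                have e2 : v j i ≤ 1 := (hvbox j hjT).2 i
                have e3 : (0:ℝ) ≤ x j i := (hxbox j hjT.le).1 i
                have e4 : x j i ≤ 1 := (hxbox j hjT.le).2 i
                nlinarith
              nlinarith [sq_nonneg (1 - fwRatio T j)]
          _ = (1 - fwRatio T j)^2 * (n:ℝ) := by
              simp [Finset.sum_const, mul_comm]
      have hcomb : F (x j) + (1 - fwRatio T j) * (1 / s j * F xstar - 2 * F (x j))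
          - L / 2 * ((1 - fwRatio T j)^2 * (n:ℝ)) ≤ F (x (j+1)) := by
        have e1 := mul_le_mul_of_nonneg_left hSl hγ0
        have e2 := mul_le_mul_of_nonneg_left hΔsq (by linarith : (0:ℝ) ≤ L / 2)
        rw [hsum1] at hsm1
        linarith
      have h5 := mul_le_mul_of_nonneg_left hcomb (sq_nonneg (s (j+1)))
      have e10 : (s (j+1))^2 * F (x j) + (s (j+1)) * (s (j+1) - s j) * (1 / s j * F xstar
            - 2 * F (x j)) - (L * (n:ℝ) / 2) * (s (j+1) - s j)^2
          = (s (j+1))^2 * (F (x j) + (1 - fwRatio T j) * (1 / s j * F xstar - 2 * F (x j))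
            - L / 2 * ((1 - fwRatio T j)^2 * (n:ℝ))) := by
        rw [← hqγ]; ring
      have hkey : (s j + (s (j+1) - s j))^2 * F (x j)
            + (s j + (s (j+1) - s j)) * (s (j+1) - s j) * (1 / s j * F xstar - 2 * F (x j))
            - (L * (n:ℝ) / 2) * (s (j+1) - s j)^2
          ≤ (s j + (s (j+1) - s j))^2 * F (x (j+1)) := by
        have hq' : s j + (s (j+1) - s j) = s (j+1) := by ring
        rw [hq', e10]
        exact h5
      have hR0 : (0:ℝ) ≤ L * (n:ℝ) / 2 * ∑ k ∈ Finset.range j, (s (k+1) - s k)^2 := by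
        have : (0:ℝ) ≤ ∑ k ∈ Finset.range j, (s (k+1) - s k)^2 :=
          Finset.sum_nonneg fun k _ => sq_nonneg _
        positivity
      have hW0 : (0:ℝ) ≤ L * (n:ℝ) / 2 := by positivity
      have := arith_step (F (x j)) (F (x (j+1))) (F xstar)
        (L * (n:ℝ) / 2 * ∑ k ∈ Finset.range j, (s (k+1) - s k)^2) (L * (n:ℝ) / 2)
        (s j) (s (j+1) - s j) (hFx j hjT.le) hFs0 hR0 hW0 (hs1 j) (hδ0 j) (hδle1 j) ihj hkey
      have hq' : s j + (s (j+1) - s j) = s (j+1) := by ring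
      rw [hq'] at this
      rw [Finset.sum_range_succ]
      linarith
  -- conclusion
  refine ⟨T, le_refl T, ?_⟩
  have mainT := main T (le_refl T)
  rw [hsT] at mainT
  have hsum2 : ∑ k ∈ Finset.range T, (s (k+1) - s k)^2 = harmonicNum2 T / H^2 := by
    rw [harmonicNum2, Finset.sum_div]
    refine Finset.sum_congr rfl fun k _ => ?_
    rw [hsd k, div_pow, one_pow, mul_pow, div_div]
  rw [hsum2] at mainT
  have hX0 : (0:ℝ) ≤ harmonicNum2 T / H^2 := by
    have : (0:ℝ) ≤ harmonicNum2 T := by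
      rw [harmonicNum2]; positivity
    positivity
  have hLn : L * (n:ℝ) ≤ c * (n:ℝ)^3 * F xstar := by
    have h := mul_le_mul_of_nonneg_right hLc (Nat.cast_nonneg (α := ℝ) n)
    calc L * (n:ℝ) ≤ c * (n:ℝ)^2 * F xstar * (n:ℝ) := h
      _ = c * (n:ℝ)^3 * F xstar := by ring
  have hfin := mul_le_mul_of_nonneg_right
    (by linarith : L * (n:ℝ) / 2 ≤ c * (n:ℝ)^3 * F xstar / 2) hX0
  rw [ge_iff_le]
  nlinarith [mainT, hfin]
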